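/- arXiv:1806.03506 — 3 statements merged into one kernel-verified Lean document; each statement's English description precedes it below -/
import Mathlib

section
/- Under the assumptions that f(x) = x·m(x) with m non-increasing, a = m(0) > 1, and f increasing, the sequence h_n(x) := f_n(x/a^n), where f_n is the n-th iterate of f, is non-increasing in n for each fixed x ≥ 0; hence the pointwise limit h(x) := lim_{n→∞} f_n(x/a^n) exists. -/
/-- The sequence `h_n x = f^[n] (x / a^n)` is non-increasing in `n` for each `x ≥ 0`,
and hence the pointwise limit `h x = lim_n f^[n] (x / a^n)` exists. -/
theorem stmt_1 (m f : ℝ → ℝ) (a : ℝ)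
    (hm_nonneg : ∀ x, 0 ≤ x → 0 ≤ m x)
    (hm_anti : ∀ x y, 0 ≤ x → x ≤ y → m y ≤ m x)
    (ha : a = m 0) (ha1 : 1 < a)
    (hf : ∀ x, 0 ≤ x → f x = x * m x)
    (hf_mono : MonotoneOn f (Set.Ici 0)) :
    ∀ x, 0 ≤ x →
      (∀ n : ℕ, f^[n + 1] (x / a ^ (n + 1)) ≤ f^[n] (x / a ^ n)) ∧
      ∃ L : ℝ, Filter.Tendsto (fun n : ℕ => f^[n] (x / a ^ n)) Filter.atTop (nhds L) := by
  have ha0 : 0 < a := lt_trans one_pos ha1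
  have hf_nonneg : ∀ y, 0 ≤ y → 0 ≤ f y := fun y hy => by
    rw [hf y hy]; exact mul_nonneg hy (hm_nonneg y hy)
  have hiter_nonneg : ∀ n y, 0 ≤ y → 0 ≤ f^[n] y := by
    intro n
    induction n with
    | zero => intro y hy; simpa using hy
    | succ k ih =>
      intro y hy
      rw [Function.iterate_succ_apply]
      exact ih _ (hf_nonneg y hy)
  have hiter_mono : ∀ n, MonotoneOn f^[n] (Set.Ici 0) := by
    intro n
    induction n with
    | zero => intro y hy z hz hyz; simpa using hyz
    | succ k ih =>
      intro y hy z hz hyz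
      rw [Function.iterate_succ_apply, Function.iterate_succ_apply]
      exact ih (hf_nonneg y hy) (hf_nonneg z hz) (hf_mono hy hz hyz)
  have hfa : ∀ y, 0 ≤ y → f y ≤ a * y := by
    intro y hy
    rw [hf y hy, mul_comm]
    exact mul_le_mul_of_nonneg_right (ha ▸ hm_anti 0 y le_rfl hy) hy
  intro x hx
  have hstep : ∀ n : ℕ, f^[n + 1] (x / a ^ (n + 1)) ≤ f^[n] (x / a ^ n) := by
    intro n
    have hpos : 0 ≤ x / a ^ (n + 1) := div_nonneg hx (le_of_lt (pow_pos ha0 _))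
    rw [Function.iterate_succ_apply]
    have h1 : f (x / a ^ (n + 1)) ≤ x / a ^ n := by
      have := hfa _ hpos
      calc f (x / a ^ (n + 1)) ≤ a * (x / a ^ (n + 1)) := this
        _ = x / a ^ n := by
          field_simp
          ring
    exact hiter_mono n (hf_nonneg _ hpos) (div_nonneg hx (le_of_lt (pow_pos ha0 _))) h1
  refine ⟨hstep, ?_⟩
  have hanti : Antitone (fun n : ℕ => f^[n] (x / a ^ n)) :=
    antitone_nat_of_succ_le hstep
  have hbdd : BddBelow (Set.range (fun n : ℕ => f^[n] (x / a ^ n))) := by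
    refine ⟨0, ?_⟩
    rintro _ ⟨n, rfl⟩
    exact hiter_nonneg n _ (div_nonneg hx (le_of_lt (pow_pos ha0 _)))
  exact ⟨_, tendsto_atTop_ciInf hanti hbdd⟩
end

section
/- The limit function h(x) = lim_{n→∞} f_n(x/a^n) satisfies Schröder's functional equation h(x) = f(h(x/a)) for all x ≥ 0. -/
/-- The limit function `h x = lim_n f^[n] (x / a^n)` satisfies Schröder's functional
equation `h x = f (h (x / a))` for all `x ≥ 0`. -/
theorem stmt_2 (m f h : ℝ → ℝ) (a : ℝ)
    (hm_anti : ∀ x y, 0 ≤ x → x ≤ y → m y ≤ m x)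
    (ha : a = m 0) (ha1 : 1 < a)
    (hf : ∀ x, 0 ≤ x → f x = x * m x)
    (hf_mono : StrictMonoOn f (Set.Ici 0))
    (hf_cont : ContinuousOn f (Set.Ici 0))
    (hf_nonneg : ∀ x, 0 ≤ x → 0 ≤ f x)
    (hh : ∀ x, 0 ≤ x →
      Filter.Tendsto (fun n : ℕ => f^[n] (x / a ^ n)) Filter.atTop (nhds (h x))) :
    ∀ x, 0 ≤ x → h x = f (h (x / a)) := by
  intro x hx
  have ha0 : 0 < a := lt_trans one_pos ha1
  have hxa : 0 ≤ x / a := div_nonneg hx ha0.le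
  have hiter : ∀ n : ℕ, ∀ y : ℝ, 0 ≤ y → 0 ≤ f^[n] y := by
    intro n
    induction n with
    | zero => intro y hy; simpa using hy
    | succ k ih =>
      intro y hy
      rw [Function.iterate_succ_apply]
      exact ih _ (hf_nonneg y hy)
  -- sequence for x/a
  have hseq : Filter.Tendsto (fun n : ℕ => f^[n] (x / a / a ^ n)) Filter.atTop
      (nhds (h (x / a))) := hh _ hxa
  have hnn : ∀ n : ℕ, 0 ≤ f^[n] (x / a / a ^ n) := fun n =>
    hiter n _ (div_nonneg hxa (pow_nonneg ha0.le n))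
  have hhxa : 0 ≤ h (x / a) := le_of_tendsto_of_tendsto' tendsto_const_nhds hseq hnn
  have hcw : ContinuousWithinAt f (Set.Ici 0) (h (x / a)) := hf_cont _ hhxa
  have hseq' : Filter.Tendsto (fun n : ℕ => f^[n] (x / a / a ^ n)) Filter.atTop
      (nhdsWithin (h (x / a)) (Set.Ici 0)) := by
    rw [tendsto_nhdsWithin_iff]
    exact ⟨hseq, Filter.Eventually.of_forall hnn⟩
  have hcomp : Filter.Tendsto (fun n : ℕ => f (f^[n] (x / a / a ^ n))) Filter.atTop
      (nhds (f (h (x / a)))) := hcw.tendsto.comp hseq'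
  have heq : ∀ n : ℕ, f (f^[n] (x / a / a ^ n)) = f^[n + 1] (x / a ^ (n + 1)) := by
    intro n
    rw [Function.iterate_succ_apply']
    congr 1
    rw [div_div]
    ring_nf
  have hcomp' : Filter.Tendsto (fun n : ℕ => f^[n + 1] (x / a ^ (n + 1))) Filter.atTop
      (nhds (f (h (x / a)))) := by
    simpa only [heq] using hcomp
  have hsub : Filter.Tendsto (fun n : ℕ => f^[n + 1] (x / a ^ (n + 1))) Filter.atTop
      (nhds (h x)) := (hh x hx).comp (Filter.tendsto_add_atTop_nat 1)
  exact tendsto_nhds_unique hsub hcomp'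
end

section
/- Suppose f is differentiable with f'(y) ≥ a − C·y for 0 ≤ y ≤ ε, where a > 1, C > 0, and 0 ≤ f(y) ≤ a·y for all y ≥ 0. Then for x < min(ε, 1/C) and all n ≥ 0, the derivative of h_n(x) = f_n(x/a^n) satisfies h_n'(x) ≥ ∏_{j=0}^{n−1} (1 − a^{−j}·C·x) ≥ ∏_{j≥0}(1 − a^{−j}). -/
/-- Derivative lower bound for `h_n x = f^[n] (x / a^n)`:
`h_n' x ≥ ∏_{j<n} (1 - a^{-j} C x) ≥ ∏_{j≥0} (1 - a^{-j})`. -/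
theorem stmt_4 (f : ℝ → ℝ) (a C ε : ℝ) (ha1 : 1 < a) (hC : 0 < C) (hε : 0 < ε)
    (hf_diff : Differentiable ℝ f)
    (hf_bounds : ∀ y, 0 ≤ y → 0 ≤ f y ∧ f y ≤ a * y)
    (hf_deriv : ∀ y, 0 ≤ y → y ≤ ε → a - C * y ≤ deriv f y) :
    ∀ x, 0 ≤ x → x < min ε (1 / C) → ∀ n : ℕ,
      (∏ j ∈ Finset.range n, (1 - (a ^ j)⁻¹ * C * x)) ≤
        deriv (fun y => f^[n] (y / a ^ n)) x ∧
      (∏' j : ℕ, (1 - (a ^ j)⁻¹)) ≤ ∏ j ∈ Finset.range n, (1 - (a ^ j)⁻¹ * C * x) := by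
  have ha0 : (0:ℝ) < a := lt_trans one_pos ha1
  -- bounds on iterates
  have hiter : ∀ (k : ℕ) (y : ℝ), 0 ≤ y → 0 ≤ f^[k] y ∧ f^[k] y ≤ a ^ k * y := by
    intro k
    induction k with
    | zero => intro y hy; simpa using hy
    | succ k ih =>
      intro y hy
      obtain ⟨h1, h2⟩ := ih y hy
      rw [Function.iterate_succ_apply']
      refine ⟨(hf_bounds _ h1).1, ?_⟩
      calc f (f^[k] y) ≤ a * f^[k] y := (hf_bounds _ h1).2
        _ ≤ a * (a ^ k * y) := by nlinarith
        _ = a ^ (k+1) * y := by ring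
  -- derivative of iterates
  have hderiv_iter : ∀ (n : ℕ) (y : ℝ),
      HasDerivAt (f^[n]) (∏ k ∈ Finset.range n, deriv f (f^[k] y)) y := by
    intro n
    induction n with
    | zero => intro y; simpa using hasDerivAt_id y
    | succ n ih =>
      intro y
      have h1 : HasDerivAt f (deriv f (f^[n] y)) (f^[n] y) :=
        (hf_diff (f^[n] y)).hasDerivAt
      have h2 := h1.comp y (ih y)
      rw [Function.iterate_succ', Finset.prod_range_succ, mul_comm]
      exact h2
  intro x hx hxlt n
  have hxε : x < ε := lt_of_lt_of_le hxlt (min_le_left _ _)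
  have hCx : C * x < 1 := by
    have h := lt_of_lt_of_le hxlt (min_le_right _ _)
    rw [lt_div_iff₀ hC] at h; linarith
  have hCx0 : 0 ≤ C * x := mul_nonneg hC.le hx
  constructor
  · -- the derivative bound
    set y0 := x / a ^ n with hy0
    have han : (0:ℝ) < a ^ n := pow_pos ha0 n
    have hy0n : 0 ≤ y0 := div_nonneg hx han.le
    have hdiv : HasDerivAt (fun y : ℝ => y / a ^ n) ((a ^ n)⁻¹) x := by
      simpa using (hasDerivAt_id x).div_const (a ^ n)
    have hcomp : HasDerivAt (fun y : ℝ => f^[n] (y / a ^ n))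
        ((∏ k ∈ Finset.range n, deriv f (f^[k] y0)) * (a ^ n)⁻¹) x := by
      have := (hderiv_iter n y0).comp x hdiv
      exact this
    rw [hcomp.deriv]
    -- per-index facts
    have hfact : ∀ k ∈ Finset.range n,
        a ^ k * y0 ≤ x ∧ 0 ≤ f^[k] y0 ∧ f^[k] y0 ≤ a ^ k * y0 := by
      intro k hk
      rw [Finset.mem_range] at hk
      obtain ⟨hz0, hz1⟩ := hiter k y0 hy0n
      refine ⟨?_, hz0, hz1⟩
      have hkn : a ^ k ≤ a ^ n := pow_le_pow_right₀ ha1.le hk.le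
      rw [hy0]
      calc a ^ k * (x / a ^ n) ≤ a ^ n * (x / a ^ n) := by
            apply mul_le_mul_of_nonneg_right hkn (div_nonneg hx han.le)
        _ = x := by field_simp
    -- bound the product of derivatives below
    have hstep1 : ∏ k ∈ Finset.range n, (a - C * (a ^ k * y0)) ≤
        ∏ k ∈ Finset.range n, deriv f (f^[k] y0) := by
      apply Finset.prod_le_prod
      · intro k hk
        obtain ⟨hle, hz0, hz1⟩ := hfact k hk
        nlinarith
      · intro k hk
        obtain ⟨hle, hz0, hz1⟩ := hfact k hk
        have : f^[k] y0 ≤ ε := le_trans (le_trans hz1 hle) hxε.le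
        have hd := hf_deriv _ hz0 this
        nlinarith
    -- reflect the product
    have hrefl : ∏ k ∈ Finset.range n, (a - C * (a ^ (n-1-k) * y0)) =
        ∏ k ∈ Finset.range n, (a - C * (a ^ k * y0)) :=
      Finset.prod_range_reflect (fun k => a - C * (a ^ k * y0)) n
    -- rewrite reflected terms
    have hterm : ∀ k ∈ Finset.range n,
        a - C * (a ^ (n-1-k) * y0) = a * (1 - (a ^ (k+2))⁻¹ * C * x) := by
      intro k hk
      rw [Finset.mem_range] at hk
      have hkn : (n-1-k) + (k+1) = n := by omega
      have hpow : a ^ (n-1-k) * a ^ (k+1) = a ^ n := by rw [← pow_add, hkn]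
      have h1 : (0:ℝ) < a ^ (k+1) := pow_pos ha0 _
      have h2 : (0:ℝ) < a ^ (k+2) := pow_pos ha0 _
      have h3 : a ^ (k+2) = a * a ^ (k+1) := by ring
      have hpow2 : a ^ (n-1-k) * a ^ (k+2) = a * a ^ n := by
        rw [h3]; nlinarith [hpow]
      rw [hy0]
      field_simp
      linear_combination (-(C*x)) * hpow2
    have hstep2 : ∏ k ∈ Finset.range n, (a - C * (a ^ k * y0)) =
        a ^ n * ∏ k ∈ Finset.range n, (1 - (a ^ (k+2))⁻¹ * C * x) := by
      rw [← hrefl, Finset.prod_congr rfl hterm, Finset.prod_mul_distrib,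
        Finset.prod_const, Finset.card_range]
    -- compare the two finite products termwise
    have hstep3 : ∏ j ∈ Finset.range n, (1 - (a ^ j)⁻¹ * C * x) ≤
        ∏ k ∈ Finset.range n, (1 - (a ^ (k+2))⁻¹ * C * x) := by
      apply Finset.prod_le_prod
      · intro j _
        have h1 : (1:ℝ) ≤ a ^ j := one_le_pow₀ ha1.le
        have h2 : (a ^ j)⁻¹ ≤ 1 := inv_le_one_of_one_le₀ h1
        have h3 : (0:ℝ) < a ^ j := pow_pos ha0 j
        have h4 : (0:ℝ) ≤ (a ^ j)⁻¹ := by positivity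
        nlinarith
      · intro j _
        have h1 : a ^ j ≤ a ^ (j+2) := pow_le_pow_right₀ ha1.le (by omega)
        have h3 : (0:ℝ) < a ^ j := pow_pos ha0 j
        have h5 : (a ^ (j+2))⁻¹ ≤ (a ^ j)⁻¹ := by
          apply inv_anti₀ h3 h1
        nlinarith
    calc ∏ j ∈ Finset.range n, (1 - (a ^ j)⁻¹ * C * x)
        ≤ ∏ k ∈ Finset.range n, (1 - (a ^ (k+2))⁻¹ * C * x) := hstep3
      _ = (∏ k ∈ Finset.range n, (a - C * (a ^ k * y0))) * (a ^ n)⁻¹ := by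
          rw [hstep2]; field_simp
      _ ≤ (∏ k ∈ Finset.range n, deriv f (f^[k] y0)) * (a ^ n)⁻¹ := by
          apply mul_le_mul_of_nonneg_right hstep1 (by positivity)
  · -- the tprod is 0 since the j = 0 factor vanishes
    have htp : (∏' j : ℕ, (1 - ((a:ℝ) ^ j)⁻¹)) = 0 := by
      have h : HasProd (fun j : ℕ => 1 - ((a:ℝ) ^ j)⁻¹) 0 := by
        have he : (fun s : Finset ℕ => ∏ j ∈ s, (1 - ((a:ℝ)^j)⁻¹))
            =ᶠ[Filter.atTop] fun _ => 0 := by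
          filter_upwards [Filter.eventually_ge_atTop ({0} : Finset ℕ)] with s hs
          exact Finset.prod_eq_zero (hs (Finset.mem_singleton_self 0)) (by simp)
        exact Filter.Tendsto.congr' he.symm tendsto_const_nhds
      exact h.tprod_eq
    rw [htp]
    apply Finset.prod_nonneg
    intro j _
    have h1 : (1:ℝ) ≤ a ^ j := one_le_pow₀ ha1.le
    have h2 : (a ^ j)⁻¹ ≤ 1 := inv_le_one_of_one_le₀ h1
    have h4 : (0:ℝ) ≤ (a ^ j)⁻¹ := by positivity
    nlinarith
end
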